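/- Let K and K' be positive real constants and let {ξ_n}_{n≥0} be a real-valued process adapted to a filtration {𝓕_n}_{n≥0} on a probability space, with ξ_0 integrable, such that almost surely for every n: E(ξ_{n+1} | 𝓕_n) ≥ ξ_n + K and |ξ_{n+1} − ξ_n| ≤ K'. Let T ∈ ℝ and let τ = inf{n ∈ ℕ : ξ_n ≥ T} (with inf ∅ = ∞). Then P(τ < ∞) = 1. -/

import Mathlib

open MeasureTheory Filter
open scoped ENNReal

/-- a process with uniformly positive drift and bounded increments hits any
level `T` in finite time almost surely (Lemma `lem6a` of the paper). -/
theorem hitting_time_finite_as {Ω : Type*} {m : MeasurableSpace Ω}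
    (μ : Measure Ω) [IsProbabilityMeasure μ]
    (𝓕 : Filtration ℕ m) (ξ : ℕ → Ω → ℝ) (K K' : ℝ) (hK : 0 < K) (hK' : 0 < K')
    (hadapted : Adapted 𝓕 ξ) (hint : Integrable (ξ 0) μ)
    (hdrift : ∀ n : ℕ, ∀ᵐ ω ∂μ,
      ξ n ω + K ≤ (μ[ξ (n + 1) | 𝓕 n]) ω ∧ |ξ (n + 1) ω - ξ n ω| ≤ K')
    (T : ℝ) :
    μ {ω | (⨅ (n : ℕ) (_ : T ≤ ξ n ω), (n : ℝ≥0∞)) < ⊤} = 1 := by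
  classical
  have hle : ∀ n, 𝓕 n ≤ m := fun n => 𝓕.le n
  -- integrability of each ξ n
  have hint' : ∀ n, Integrable (ξ n) μ := by
    intro n
    induction n with
    | zero => exact hint
    | succ n ih =>
      refine Integrable.mono' (ih.abs.add (integrable_const K'))
        (((hadapted (n+1)).mono (hle (n+1)) le_rfl).aestronglyMeasurable) ?_
      filter_upwards [hdrift n] with ω hω
      have h2 := hω.2
      have h3 := abs_sub_abs_le_abs_sub (ξ (n+1) ω) (ξ n ω)
      show |ξ (n+1) ω| ≤ |ξ n ω| + K'
      linarith
  set S : ℕ → Set Ω := fun n => {ω | ∀ k ≤ n, ξ k ω < T} with hSdef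
  set A : Set Ω := {ω | ∀ n, ξ n ω < T} with hAdef
  have hAS : ∀ n, A ⊆ S n := fun n ω hω k _ => hω k
  have hSmono : ∀ n, S (n+1) ⊆ S n := fun n ω hω k hk => hω k (hk.trans (Nat.le_succ n))
  have hSmeasF : ∀ n, MeasurableSet[𝓕 n] (S n) := by
    intro n
    have hSeq : S n = ⋂ k, ⋂ (_ : k ≤ n), {ω | ξ k ω < T} := by
      ext ω; simp [hSdef]
    rw [hSeq]
    exact MeasurableSet.iInter fun k => MeasurableSet.iInter fun hk =>
      measurableSet_lt ((hadapted k).mono (𝓕.mono hk) le_rfl) measurable_const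
  have hSmeas : ∀ n, MeasurableSet (S n) := fun n => hle n _ (hSmeasF n)
  have hAmeas : MeasurableSet A := by
    have hAeq : A = ⋂ n, S n := by
      ext ω
      simp only [Set.mem_iInter]
      exact ⟨fun h n k _ => h k, fun h n => h n n le_rfl⟩
    rw [hAeq]; exact MeasurableSet.iInter hSmeas
  set a : ℝ := (μ A).toReal with hadef
  set c : ℝ := |T + K'| with hcdef
  have hc0 : 0 ≤ c := abs_nonneg _
  set I : ℕ → ℝ := fun n => ∫ ω in S n, ξ n ω ∂μ with hIdef
  set s : ℕ → ℝ := fun n => (μ (S n)).toReal with hsdef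
  have hs01 : ∀ n, 0 ≤ s n ∧ s n ≤ 1 := by
    intro n
    exact ⟨ENNReal.toReal_nonneg, by
      have := prob_le_one (μ := μ) (s := S n)
      simpa [hsdef] using ENNReal.toReal_mono ENNReal.one_ne_top this⟩
  have has : ∀ n, a ≤ s n := fun n =>
    ENNReal.toReal_mono (measure_ne_top μ _) (measure_mono (hAS n))
  have ha0 : 0 ≤ a := ENNReal.toReal_nonneg
  -- the key one-step estimate
  have key : ∀ n, I n + K * a ≤ I (n+1) + c * (s n - s (n+1)) := by
    intro n
    -- first: ∫_{S n} ξ (n+1) ≥ I n + K * s n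
    have h1 : I n + K * s n ≤ ∫ ω in S n, ξ (n+1) ω ∂μ := by
      rw [← setIntegral_condExp (hle n) (hint' (n+1)) (hSmeasF n)]
      have hmono : ∫ ω in S n, (ξ n ω + K) ∂μ ≤ ∫ ω in S n, (μ[ξ (n+1)|𝓕 n]) ω ∂μ := by
        refine setIntegral_mono_ae ((hint' n).add (integrable_const K)).integrableOn
          integrable_condExp.integrableOn ?_
        filter_upwards [hdrift n] with ω hω using hω.1
      have heq : ∫ ω in S n, (ξ n ω + K) ∂μ = I n + K * s n := by
        rw [integral_add (hint' n).integrableOn (integrable_const K).integrableOn,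
          setIntegral_const]
        simp [hIdef, hsdef, smul_eq_mul, mul_comm, measureReal_def]
      linarith [hmono, heq.ge]
    -- decomposition of the integral over S n
    have hdiffsub : S n \ S (n+1) ⊆ S n := Set.diff_subset
    have hdecomp : ∫ ω in S n \ S (n+1), ξ (n+1) ω ∂μ
        = (∫ ω in S n, ξ (n+1) ω ∂μ) - I (n+1) := by
      exact integral_diff (hSmeas (n+1)) (hint' (n+1)).integrableOn (hSmono n)
    -- bound on the diff piece
    have hbound : ∫ ω in S n \ S (n+1), ξ (n+1) ω ∂μ
        ≤ c * (μ (S n \ S (n+1))).toReal := by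
      have : ∫ ω in S n \ S (n+1), ξ (n+1) ω ∂μ ≤ ∫ _ω in S n \ S (n+1), c ∂μ := by
        refine setIntegral_mono_ae_restrict (hint' (n+1)).integrableOn
          (integrable_const c).integrableOn ?_
        have hms : MeasurableSet (S n \ S (n+1)) := (hSmeas n).diff (hSmeas (n+1))
        refine (ae_restrict_iff' hms).mpr ?_
        filter_upwards [hdrift n] with ω hω hωs
        have hξn : ξ n ω < T := hωs.1 n le_rfl
        have : ξ (n+1) ω - ξ n ω ≤ K' := (abs_le.mp hω.2).2
        calc ξ (n+1) ω ≤ ξ n ω + K' := by linarith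
          _ ≤ T + K' := by linarith
          _ ≤ c := le_abs_self _
      simpa [setIntegral_const, smul_eq_mul, mul_comm, measureReal_def] using this
    have hmdiff : (μ (S n \ S (n+1))).toReal = s n - s (n+1) := by
      rw [measure_diff (hSmono n) (hSmeas (n+1)).nullMeasurableSet (measure_ne_top μ _)]
      exact ENNReal.toReal_sub_of_le (measure_mono (hSmono n)) (measure_ne_top μ _)
    have haK : K * a ≤ K * s n := mul_le_mul_of_nonneg_left (has n) hK.le
    rw [hmdiff] at hbound
    linarith [h1, hbound, hdecomp.symm.le, hdecomp.le]
  -- iterate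
  have main : ∀ N : ℕ, I 0 + N * (K * a) ≤ I N + c * (1 - s N) := by
    intro N
    induction N with
    | zero =>
      simp only [Nat.cast_zero, zero_mul, add_zero]
      nlinarith [(hs01 0).1, (hs01 0).2, hc0]
    | succ N ih =>
      have hk := key N
      push_cast
      nlinarith [hk, ih]
  -- I N is bounded above by |T|
  have hIbound : ∀ N, I N ≤ |T| := by
    intro N
    have h1 : I N ≤ ∫ _ω in S N, T ∂μ := by
      refine setIntegral_mono_on (hint' N).integrableOn
        (integrable_const T).integrableOn (hSmeas N) ?_
      intro ω hω
      exact (hω N le_rfl).le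
    have h2 : ∫ _ω in S N, T ∂μ = s N * T := by
      simp [setIntegral_const, smul_eq_mul, hsdef, measureReal_def]
    have h3 : s N * T ≤ |T| := by
      rcases le_or_gt 0 T with hT | hT
      · calc s N * T ≤ 1 * T := mul_le_mul_of_nonneg_right (hs01 N).2 hT
          _ = T := one_mul T
          _ ≤ |T| := le_abs_self T
      · calc s N * T ≤ 0 := mul_nonpos_of_nonneg_of_nonpos (hs01 N).1 hT.le
          _ ≤ |T| := abs_nonneg T
    linarith
  -- conclude a = 0
  have ha : a = 0 := by
    by_contra hne
    have hapos : 0 < a := lt_of_le_of_ne ha0 (Ne.symm hne)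
    have hKa : 0 < K * a := mul_pos hK hapos
    obtain ⟨N, hN⟩ := exists_nat_gt ((|T| + c - I 0) / (K * a))
    have h1 := main N
    have h2 := hIbound N
    have h3 := (hs01 N).1
    have h4 : (|T| + c - I 0) < N * (K * a) := by
      rwa [div_lt_iff₀ hKa] at hN
    nlinarith
  have hμA : μ A = 0 := by
    have := measure_ne_top μ A
    rw [hadef] at ha
    exact (ENNReal.toReal_eq_zero_iff _).mp ha |>.resolve_right this
  -- identify the goal set with Aᶜ
  have hset : {ω | (⨅ (n : ℕ) (_ : T ≤ ξ n ω), (n : ℝ≥0∞)) < ⊤} = Aᶜ := by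
    ext ω
    simp only [Set.mem_setOf_eq, Set.mem_compl_iff, hAdef]
    constructor
    · intro h hall
      have : (⨅ (n : ℕ) (_ : T ≤ ξ n ω), (n : ℝ≥0∞)) = ⊤ := by
        rw [iInf_eq_top]
        intro n
        rw [iInf_eq_top]
        intro hn
        exact absurd hn (not_le.mpr (hall n))
      rw [this] at h
      exact lt_irrefl _ h
    · intro h
      push_neg at h
      obtain ⟨n, hn⟩ := h
      refine lt_of_le_of_lt (iInf_le_of_le n (iInf_le_of_le hn le_rfl)) ?_
      exact ENNReal.natCast_lt_top n
  rw [hset]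
  exact (prob_compl_eq_one_iff hAmeas).mpr hμA
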